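/- Let (E_n) be a sequence of finite subsets of a compact metric space K, all of the same cardinality m−1, such that there exists ε₀ > 0 with d(x,y) ≥ ε₀ for all distinct x, y in each E_n. If Σ_{n≥0} sup_{x ∈ E_{n+1}} d(x, E_n) < +∞, then Σ_{n≥0} d_H(E_n, E_{n+1}) < +∞, and consequently (E_n) converges in the Hausdorff metric. -/

import Mathlib

open Metric Filter TopologicalSpace

lemma key_hd {K : Type*} [MetricSpace K] (A B : Set K) (hA : A.Finite) (hB : B.Finite)
    (hAne : A.Nonempty) (hBne : B.Nonempty) (hcardAB : A.ncard = B.ncard)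
    (ε₀ : ℝ) (hε₀ : 0 < ε₀)
    (hsepB : ∀ x ∈ B, ∀ y ∈ B, x ≠ y → ε₀ ≤ dist x y)
    (r : ℝ) (hr : r < ε₀ / 2) (h : ∀ x ∈ B, infDist x A ≤ r) :
    hausdorffDist A B ≤ r := by
  classical
  have hr0 : 0 ≤ r := by
    obtain ⟨b, hb⟩ := hBne
    exact le_trans (infDist_nonneg) (h b hb)
  -- nearest point map
  have hnear : ∀ b ∈ B, ∃ a ∈ A, dist b a ≤ r := by
    intro b hb
    obtain ⟨a, ha, hda⟩ := hA.isCompact.exists_infDist_eq_dist hAne b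
    exact ⟨a, ha, hda ▸ h b hb⟩
  set B' := hB.toFinset with hB'
  set A' := hA.toFinset with hA'
  have memB' : ∀ b, b ∈ B' ↔ b ∈ B := fun b => hB.mem_toFinset
  have memA' : ∀ a, a ∈ A' ↔ a ∈ A := fun a => hA.mem_toFinset
  choose f hfA hfd using hnear
  set g : ∀ b ∈ B', K := fun b hb => f b ((memB' b).1 hb) with hg
  have hgA : ∀ b hb, g b hb ∈ A' := fun b hb => (memA' _).2 (hfA _ _)
  have hginj : ∀ b₁ b₂ hb₁ hb₂, g b₁ hb₁ = g b₂ hb₂ → b₁ = b₂ := by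
    intro b₁ b₂ hb₁ hb₂ heq
    by_contra hne
    have h1 := dist_triangle_right b₁ b₂ (g b₁ hb₁)
    rw [heq] at h1
    have h2 : dist b₁ (g b₁ hb₁) ≤ r := hfd _ _
    rw [heq] at h2
    have h3 : dist b₂ (g b₂ hb₂) ≤ r := hfd _ _
    have := hsepB b₁ ((memB' b₁).1 hb₁) b₂ ((memB' b₂).1 hb₂) hne
    linarith
  have hcard' : A'.card ≤ B'.card := by
    have e1 : A.ncard = A'.card := Set.ncard_eq_toFinset_card A hA
    have e2 : B.ncard = B'.card := Set.ncard_eq_toFinset_card B hB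
    omega
  have hsurj := Finset.surj_on_of_inj_on_of_card_le g hgA hginj hcard'
  apply hausdorffDist_le_of_infDist hr0
  · intro a ha
    obtain ⟨b, hb, hab⟩ := hsurj a ((memA' a).2 ha)
    have : dist a b ≤ r := by rw [hab, dist_comm]; exact hfd _ _
    exact le_trans (infDist_le_dist_of_mem ((memB' b).1 hb)) this
  · exact h

/-- For a sequence of `ε₀`-separated finite subsets of constant cardinality of a
compact metric space, summability of the one-sided deviations implies summability of
the Hausdorff distances, hence convergence in the Hausdorff metric. -/
theorem stmt12 {K : Type*} [MetricSpace K] [CompactSpace K]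
    (E : ℕ → Set K) (m : ℕ) (hm : 0 < m)
    (hfin : ∀ n, (E n).Finite) (hcard : ∀ n, (E n).ncard = m)
    (ε₀ : ℝ) (hε₀ : 0 < ε₀)
    (hsep : ∀ n, ∀ x ∈ E n, ∀ y ∈ E n, x ≠ y → ε₀ ≤ dist x y)
    (hsum : Summable fun n => ⨆ x ∈ E (n + 1), infDist x (E n)) :
    (Summable fun n => hausdorffDist (E n) (E (n + 1))) ∧
      ∃ L : Set K, L.Nonempty ∧ IsCompact L ∧
        Tendsto (fun n => hausdorffDist (E n) L) atTop (nhds 0) := by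
  classical
  have hne : ∀ n, (E n).Nonempty := by
    intro n
    rw [Set.nonempty_iff_ne_empty]
    intro h
    have := hcard n
    rw [h, Set.ncard_empty] at this
    omega
  set s : ℕ → ℝ := fun n => ⨆ x ∈ E (n + 1), infDist x (E n) with hs
  -- each infDist is ≤ s n
  have hle : ∀ n, ∀ x ∈ E (n + 1), infDist x (E n) ≤ s n := by
    intro n x hx
    have hbdd : BddAbove (Set.range fun x => ⨆ (_ : x ∈ E (n + 1)), infDist x (E n)) := by
      apply Set.Finite.bddAbove
      have hsub : (Set.range fun x => ⨆ (_ : x ∈ E (n + 1)), infDist x (E n)) ⊆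
          insert 0 ((fun x => infDist x (E n)) '' E (n + 1)) := by
        rintro y ⟨z, rfl⟩
        by_cases hz : z ∈ E (n + 1)
        · have : (⨆ (_ : z ∈ E (n + 1)), infDist z (E n)) = infDist z (E n) :=
            ciSup_pos (f := fun _ => infDist z (E n)) hz
          simp only [this]
          exact Set.mem_insert_of_mem _ ⟨z, hz, rfl⟩
        · simp [hz]
      exact Set.Finite.subset (Set.Finite.insert 0 ((hfin (n+1)).image _)) hsub
    calc infDist x (E n) = ⨆ (_ : x ∈ E (n + 1)), infDist x (E n) := (ciSup_pos (f := fun _ => infDist x (E n)) hx).symm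
      _ ≤ s n := le_ciSup hbdd x
  have hs0 : ∀ n, 0 ≤ s n := by
    intro n
    obtain ⟨x, hx⟩ := hne (n + 1)
    exact le_trans infDist_nonneg (hle n x hx)
  -- eventually s n < ε₀/2
  have htend : Tendsto s atTop (nhds 0) := hsum.tendsto_atTop_zero
  obtain ⟨N, hN⟩ :=
    (htend.eventually (eventually_lt_nhds (by linarith : (0:ℝ) < ε₀ / 2))).exists_forall_of_atTop
  have hhd : ∀ n, N ≤ n → hausdorffDist (E n) (E (n + 1)) ≤ s n := by
    intro n hn
    exact key_hd (E n) (E (n + 1)) (hfin n) (hfin (n + 1)) (hne n) (hne (n + 1))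
      (by rw [hcard, hcard]) ε₀ hε₀ (hsep (n + 1)) (s n) (hN n hn) (hle n)
  have hsummable : Summable fun n => hausdorffDist (E n) (E (n + 1)) := by
    rw [← summable_nat_add_iff N]
    apply Summable.of_nonneg_of_le (fun n => hausdorffDist_nonneg)
      (fun n => hhd (n + N) (by omega))
    exact (summable_nat_add_iff N).2 hsum
  refine ⟨hsummable, ?_⟩
  -- construct sequence in NonemptyCompacts
  set F : ℕ → NonemptyCompacts K := fun n =>
    ⟨⟨E n, (hfin n).isCompact⟩, hne n⟩ with hF
  have hdist : ∀ n, dist (F n) (F (n + 1)) = hausdorffDist (E n) (E (n + 1)) := by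
    intro n; exact NonemptyCompacts.dist_eq
  have hcauchy : CauchySeq F :=
    cauchySeq_of_dist_le_of_summable _ (fun n => (hdist n).le) hsummable
  obtain ⟨L, hL⟩ := cauchySeq_tendsto_of_complete hcauchy
  refine ⟨L, L.nonempty, L.isCompact, ?_⟩
  have h0 := (tendsto_iff_dist_tendsto_zero).1 hL
  convert h0 using 2 with n
  exact (NonemptyCompacts.dist_eq (x := F n) (y := L)).symm
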